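/- For every n ≥ 2, the downward pattern counts of the Sierpiński triangle satisfy A'_{2n} + 6 = A'_n + 3·A'_{n+1} and A'_{2n+1} + 6 = 3·A'_{n+1} + A'_{n+2}. -/

import Mathlib

/-- Whether the unit triangle at row `r`, column `c` of the Sierpiński triangle is filled:
upward units `(r, 2j)` are filled iff `choose r j` is odd; downward units are unfilled. -/
def filled (r c : ℕ) : Bool :=
  decide (c % 2 = 0 ∧ Nat.choose r (c / 2) % 2 = 1)

/-- The upward pattern of size `n` at upward position `(r, c)`. -/
def upPattern (n r c : ℕ) : ℕ × ℕ → Bool := fun q =>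
  if q.1 < n ∧ q.2 ≤ 2 * q.1 then filled (r + q.1) (c + q.2) else false

/-- The set of all upward patterns of size `n` occurring in the Sierpiński triangle. -/
def Pup (n : ℕ) : Set (ℕ × ℕ → Bool) :=
  { p | ∃ r c : ℕ, c % 2 = 0 ∧ c ≤ 2 * r ∧ p = upPattern n r c }

/-- The downward pattern of size `n` at downward position `(r, c)`. -/
def downPattern (n r c : ℕ) : ℕ × ℕ → Bool := fun q =>
  if q.1 < n ∧ q.2 ≤ 2 * (n - 1 - q.1) then filled (r + q.1) (c + 2 * q.1 + q.2) else false

/-- The set of all downward patterns of size `n` occurring in the Sierpiński triangle. -/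
def Pdown (n : ℕ) : Set (ℕ × ℕ → Bool) :=
  { p | ∃ r c : ℕ, c % 2 = 1 ∧ c + 2 * (n - 1) ≤ 2 * r ∧ p = downPattern n r c }

/-- The top-cut pattern of size `n` at upward position `(r, c)` (apex unit removed). -/
def topCutPattern (n r c : ℕ) : ℕ × ℕ → Bool := fun q =>
  if 1 ≤ q.1 ∧ q.1 < n ∧ q.2 ≤ 2 * q.1 then filled (r + q.1) (c + q.2) else false

/-- The set of all top-cut patterns of size `n` occurring in the Sierpiński triangle. -/
def PtopCut (n : ℕ) : Set (ℕ × ℕ → Bool) :=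
  { p | ∃ r c : ℕ, c % 2 = 0 ∧ c ≤ 2 * r ∧ p = topCutPattern n r c }

/-- The bottom-cut pattern of size `n` at upward position `(r, c)`
(both bottom corner units removed). -/
def botCutPattern (n r c : ℕ) : ℕ × ℕ → Bool := fun q =>
  if (q.1 < n ∧ q.2 ≤ 2 * q.1) ∧ ¬(q.1 = n - 1 ∧ (q.2 = 0 ∨ q.2 = 2 * (n - 1)))
  then filled (r + q.1) (c + q.2) else false

/-- The set of all bottom-cut patterns of size `n` occurring in the Sierpiński triangle. -/
def PbotCut (n : ℕ) : Set (ℕ × ℕ → Bool) :=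
  { p | ∃ r c : ℕ, c % 2 = 0 ∧ c ≤ 2 * r ∧ p = botCutPattern n r c }

/-- The fully-cut pattern of size `n` at upward position `(r, c)`
(all three corner units removed). -/
def fullyCutPattern (n r c : ℕ) : ℕ × ℕ → Bool := fun q =>
  if (q.1 < n ∧ q.2 ≤ 2 * q.1) ∧ q ≠ (0, 0) ∧ ¬(q.1 = n - 1 ∧ (q.2 = 0 ∨ q.2 = 2 * (n - 1)))
  then filled (r + q.1) (c + q.2) else false

/-- The set of all fully-cut patterns of size `n` occurring in the Sierpiński triangle. -/
def PfullyCut (n : ℕ) : Set (ℕ × ℕ → Bool) :=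
  { p | ∃ r c : ℕ, c % 2 = 0 ∧ c ≤ 2 * r ∧ p = fullyCutPattern n r c }

/-- Upward patterns of size `m` occurring inside the approximation `T_N`
(rows `0, …, 2^N - 1`). -/
def PupN (N m : ℕ) : Set (ℕ × ℕ → Bool) :=
  { p | ∃ r c : ℕ, c % 2 = 0 ∧ c ≤ 2 * r ∧ r + m ≤ 2 ^ N ∧ p = upPattern m r c }

/-- Upward patterns of size `n` at positions with `r ≡ ρ [MOD 2]` and `c ≡ γ [MOD 4]`. -/
def PupRC (n ρ γ : ℕ) : Set (ℕ × ℕ → Bool) :=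
  { p | ∃ r c : ℕ, c % 2 = 0 ∧ c ≤ 2 * r ∧ r % 2 = ρ ∧ c % 4 = γ ∧ p = upPattern n r c }

/-- Downward patterns of size `n` at positions with `r ≡ ρ [MOD 2]` and `c ≡ γ [MOD 4]`. -/
def PdownRC (n ρ γ : ℕ) : Set (ℕ × ℕ → Bool) :=
  { p | ∃ r c : ℕ, c % 2 = 1 ∧ c + 2 * (n - 1) ≤ 2 * r ∧ r % 2 = ρ ∧ c % 4 = γ ∧
      p = downPattern n r c }

/-- Top-cut patterns of size `n` at positions with `r ≡ ρ [MOD 2]` and `c ≡ γ [MOD 4]`. -/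
def PtopCutRC (n ρ γ : ℕ) : Set (ℕ × ℕ → Bool) :=
  { p | ∃ r c : ℕ, c % 2 = 0 ∧ c ≤ 2 * r ∧ r % 2 = ρ ∧ c % 4 = γ ∧ p = topCutPattern n r c }

/-- Fully-cut patterns of size `n` at positions with `r ≡ ρ [MOD 2]` and `c ≡ γ [MOD 4]`. -/
def PfullyCutRC (n ρ γ : ℕ) : Set (ℕ × ℕ → Bool) :=
  { p | ∃ r c : ℕ, c % 2 = 0 ∧ c ≤ 2 * r ∧ r % 2 = ρ ∧ c % 4 = γ ∧ p = fullyCutPattern n r c }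

/-- The everywhere-unfilled upward pattern. -/
def blankUp : ℕ × ℕ → Bool := fun _ => false

/-- The upward pattern that is filled exactly at the apex `(0, 0)`. -/
def topUp : ℕ × ℕ → Bool := fun q => decide (q = (0, 0))

/-- The size-`N` upward pattern that is filled exactly at the bottom-left corner `(N-1, 0)`. -/
def botleftUp (N : ℕ) : ℕ × ℕ → Bool := fun q => decide (q = (N - 1, 0))

/-- The size-`N` upward pattern filled exactly at the bottom-right corner `(N-1, 2(N-1))`. -/
def botrightUp (N : ℕ) : ℕ × ℕ → Bool := fun q => decide (q = (N - 1, 2 * (N - 1)))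

/-- The everywhere-unfilled downward pattern. -/
def blankDown : ℕ × ℕ → Bool := fun _ => false

/-- The size-`N` downward pattern filled exactly at the upward units along the top side:
positions `(0, m)` with `m` odd, `1 ≤ m ≤ 2N - 3`. -/
def topsideDown (N : ℕ) : ℕ × ℕ → Bool := fun q =>
  decide (q.1 = 0 ∧ q.2 % 2 = 1 ∧ 1 ≤ q.2 ∧ q.2 ≤ 2 * N - 3)

/-- The size-`N` downward pattern filled exactly at the upward units along the left side:
positions `(k, 1)` with `0 ≤ k ≤ N - 2`. -/
def leftsideDown (N : ℕ) : ℕ × ℕ → Bool := fun q =>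
  decide (q.2 = 1 ∧ q.1 ≤ N - 2)

/-- The size-`N` downward pattern filled exactly at the upward units along the right side:
positions `(k, 2(N-1-k) - 1)` with `0 ≤ k ≤ N - 2`. -/
def rightsideDown (N : ℕ) : ℕ × ℕ → Bool := fun q =>
  decide (q.1 ≤ N - 2 ∧ q.2 = 2 * (N - 1 - q.1) - 1)

def chi (a b : ℕ) : ℕ := Nat.choose a b % 2

lemma chi_le_one (a b : ℕ) : chi a b ≤ 1 := Nat.lt_succ_iff.mp (Nat.mod_lt _ (by norm_num))

lemma chi_half (a b : ℕ) : chi a b = chi (a % 2) (b % 2) * chi (a / 2) (b / 2) % 2 := by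
  have h := @Choose.choose_modEq_choose_mod_mul_choose_div_nat a b 2 ⟨Nat.prime_two⟩
  unfold Nat.ModEq at h
  unfold chi
  rw [h, Nat.mul_mod]

lemma chi_ee (a b : ℕ) : chi (2*a) (2*b) = chi a b := by
  rw [chi_half]
  have h1 : (2*a) % 2 = 0 := by omega
  have h2 : (2*b) % 2 = 0 := by omega
  have h3 : (2*a)/2 = a := by omega
  have h4 : (2*b)/2 = b := by omega
  rw [h1, h2, h3, h4]
  have := chi_le_one a b
  simp [chi]
lemma chi_eo (a b : ℕ) : chi (2*a) (2*b+1) = 0 := by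
  rw [chi_half]
  have h1 : (2*a) % 2 = 0 := by omega
  have h2 : (2*b+1) % 2 = 1 := by omega
  rw [h1, h2]
  simp [chi]
lemma chi_oe (a b : ℕ) : chi (2*a+1) (2*b) = chi a b := by
  rw [chi_half]
  have h1 : (2*a+1) % 2 = 1 := by omega
  have h2 : (2*b) % 2 = 0 := by omega
  have h3 : (2*a+1)/2 = a := by omega
  have h4 : (2*b)/2 = b := by omega
  rw [h1, h2, h3, h4]
  have := chi_le_one a b
  simp [chi]
lemma chi_oo (a b : ℕ) : chi (2*a+1) (2*b+1) = chi a b := by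
  rw [chi_half]
  have h1 : (2*a+1) % 2 = 1 := by omega
  have h2 : (2*b+1) % 2 = 1 := by omega
  have h3 : (2*a+1)/2 = a := by omega
  have h4 : (2*b+1)/2 = b := by omega
  rw [h1, h2, h3, h4]
  have := chi_le_one a b
  simp [chi]

lemma chi_zero_of_lt {a b : ℕ} (h : a < b) : chi a b = 0 := by
  unfold chi; rw [Nat.choose_eq_zero_of_lt h]

lemma chi_self (a : ℕ) : chi a a = 1 := by unfold chi; simp
lemma chi_zero_right (a : ℕ) : chi a 0 = 1 := by unfold chi; simp

/-- Pascal mod 2 -/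
lemma chi_succ_succ (a b : ℕ) : chi (a+1) (b+1) = (chi a b + chi a (b+1)) % 2 := by
  unfold chi; rw [Nat.choose_succ_succ, Nat.add_mod]

/-- top-bit removal: `chi (2^K + a) b = chi a b` for `a b < 2^K`. -/
lemma chi_topbit {K a b : ℕ} (ha : a < 2^K) (hb : b < 2^K) :
    chi (2^K + a) b = chi a b := by
  induction K generalizing a b with
  | zero =>
    simp only [pow_zero] at ha hb
    interval_cases a <;> interval_cases b <;> simp [chi]
  | succ K ih =>
    obtain ⟨a', ha' | ha'⟩ : ∃ a', a = 2*a' ∨ a = 2*a'+1 := ⟨a/2, by omega⟩ <;>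
      obtain ⟨b', hb' | hb'⟩ : ∃ b', b = 2*b' ∨ b = 2*b'+1 := ⟨b/2, by omega⟩ <;>
      subst ha' hb'
    · rw [show 2^(K+1) + 2*a' = 2*(2^K + a') by ring, chi_ee, chi_ee]
      exact ih (by omega) (by omega)
    · rw [show 2^(K+1) + 2*a' = 2*(2^K + a') by ring, chi_eo, chi_eo]
    · rw [show 2^(K+1) + (2*a'+1) = 2*(2^K + a')+1 by ring, chi_oe, chi_oe]
      exact ih (by omega) (by omega)
    · rw [show 2^(K+1) + (2*a'+1) = 2*(2^K + a')+1 by ring, chi_oo, chi_oo]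
      exact ih (by omega) (by omega)

/-- both-top-bit: `chi (2^K + a) (2^K + b) = chi a b` for `a b < 2^K`. -/
lemma chi_topbit2 {K a b : ℕ} (ha : a < 2^K) (hb : b < 2^K) :
    chi (2^K + a) (2^K + b) = chi a b := by
  induction K generalizing a b with
  | zero =>
    simp only [pow_zero] at ha hb
    interval_cases a <;> interval_cases b <;> simp [chi]
  | succ K ih =>
    obtain ⟨a', ha' | ha'⟩ : ∃ a', a = 2*a' ∨ a = 2*a'+1 := ⟨a/2, by omega⟩ <;>
      obtain ⟨b', hb' | hb'⟩ : ∃ b', b = 2*b' ∨ b = 2*b'+1 := ⟨b/2, by omega⟩ <;>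
      subst ha' hb'
    · rw [show 2^(K+1) + 2*a' = 2*(2^K + a') by ring,
        show 2^(K+1) + 2*b' = 2*(2^K + b') by ring, chi_ee, chi_ee]
      exact ih (by omega) (by omega)
    · rw [show 2^(K+1) + 2*a' = 2*(2^K + a') by ring,
        show 2^(K+1) + (2*b'+1) = 2*(2^K + b')+1 by ring, chi_eo, chi_eo]
    · rw [show 2^(K+1) + (2*a'+1) = 2*(2^K + a')+1 by ring,
        show 2^(K+1) + 2*b' = 2*(2^K + b') by ring, chi_oe, chi_oe]
      exact ih (by omega) (by omega)
    · rw [show 2^(K+1) + (2*a'+1) = 2*(2^K + a')+1 by ring,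
        show 2^(K+1) + (2*b'+1) = 2*(2^K + b')+1 by ring, chi_oo, chi_oo]
      exact ih (by omega) (by omega)

/-- all-ones row: `chi (2^K - 1) b = 1` for `b ≤ 2^K - 1`. -/
lemma chi_allones {K b : ℕ} (hb : b < 2^K) : chi (2^K - 1) b = 1 := by
  induction K generalizing b with
  | zero => simp only [pow_zero] at hb; interval_cases b; simp [chi]
  | succ K ih =>
    obtain ⟨b', hb' | hb'⟩ : ∃ b', b = 2*b' ∨ b = 2*b'+1 := ⟨b/2, by omega⟩ <;> subst hb'
    · rw [show 2^(K+1) - 1 = 2*(2^K - 1)+1 by have := Nat.one_le_two_pow (n := K); ring_nf; omega,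
        chi_oe]
      exact ih (by omega)
    · rw [show 2^(K+1) - 1 = 2*(2^K - 1)+1 by have := Nat.one_le_two_pow (n := K); ring_nf; omega,
        chi_oo]
      exact ih (by omega)

-- ### section 2: filled bridge
lemma filled_two (r j : ℕ) : filled r (2*j) = decide (chi r j = 1) := by
  unfold filled chi; rw [Nat.mul_div_cancel_left j two_pos]; simp [Nat.mul_mod_right]

lemma filled_odd_col {r c : ℕ} (h : c % 2 = 1) : filled r c = false := by
  simp [filled]; omega

lemma filled_eq_of_chi {r r' j j' : ℕ} (h : chi r j = chi r' j') :
    filled r (2*j) = filled r' (2*j') := by rw [filled_two, filled_two, h]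

-- ### section 3: relocation
lemma reloc_left {n r c K : ℕ} (hr : r + n ≤ 2^K) (hc : c + 2*n ≤ 2^(K+1)) :
    downPattern n (2^K + r) c = downPattern n r c := by
  funext q
  obtain ⟨k, m⟩ := q
  unfold downPattern
  dsimp only
  split_ifs with h
  · rcases Nat.even_or_odd (c + 2*k + m) with ⟨j, hj⟩ | ⟨j, hj⟩
    · rw [show c + 2*k + m = 2*j by omega,
        show 2^K + r + k = 2^K + (r + k) by omega]
      apply filled_eq_of_chi
      exact chi_topbit (by omega) (by omega)
    · rw [show c + 2*k + m = 2*j+1 by omega, filled_odd_col (by omega),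
        filled_odd_col (by omega)]
  · rfl

lemma reloc_right {n r c K : ℕ} (hr : r + n ≤ 2^K) (hc : c + 2*n ≤ 2^(K+1)) :
    downPattern n (2^K + r) (2^(K+1) + c) = downPattern n r c := by
  funext q
  obtain ⟨k, m⟩ := q
  unfold downPattern
  dsimp only
  split_ifs with h
  · rcases Nat.even_or_odd (c + 2*k + m) with ⟨j, hj⟩ | ⟨j, hj⟩
    · rw [show 2^(K+1) + c + 2*k + m = 2*(2^K + j) by
          have h2 : (2:ℕ)^(K+1) = 2*2^K := by ring
          omega,
        show c + 2*k + m = 2*j by omega,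
        show 2^K + r + k = 2^K + (r + k) by omega]
      apply filled_eq_of_chi
      exact chi_topbit2 (by omega) (by omega)
    · rw [show 2^(K+1) + c + 2*k + m = 2*(2^K + j) + 1 by
          have h2 : (2:ℕ)^(K+1) = 2*2^K := by ring
          omega,
        show c + 2*k + m = 2*j+1 by omega, filled_odd_col (by omega), filled_odd_col (by omega)]
  · rfl

lemma downPattern_mem_Pdown {n r c : ℕ} (hc : c % 2 = 1) :
    downPattern n r c ∈ Pdown n := by
  set K := r + c + 2*n + 1 with hK
  have h2 : K < 2^K := Nat.lt_two_pow_self (n := K)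
  refine ⟨2^K + r, c, hc, by omega, ?_⟩
  have h3 : (2:ℕ)^(K+1) = 2*2^K := by ring
  rw [reloc_left (by omega) (by omega)]

lemma filled_ee (a u : ℕ) : filled (2*a) (2*(2*u)) = decide (chi a u = 1) := by
  rw [filled_two, chi_ee]
lemma filled_eo (a u : ℕ) : filled (2*a) (2*(2*u+1)) = false := by
  rw [filled_two, chi_eo]; simp
lemma filled_oe (a u : ℕ) : filled (2*a+1) (2*(2*u)) = decide (chi a u = 1) := by
  rw [filled_two, chi_oe]
lemma filled_oo (a u : ℕ) : filled (2*a+1) (2*(2*u+1)) = decide (chi a u = 1) := by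
  rw [filled_two, chi_oo]

/-- half-reading maps -/
def F01 (n' : ℕ) (p : ℕ × ℕ → Bool) : ℕ × ℕ → Bool := fun q =>
  if q.1 < n' ∧ q.2 ≤ 2*(n'-1-q.1) ∧ q.2 % 2 = 1 then p (2*q.1+1, 2*q.2-1) else false
def F03 (n' : ℕ) (p : ℕ × ℕ → Bool) : ℕ × ℕ → Bool := fun q =>
  if q.1 < n' ∧ q.2 ≤ 2*(n'-1-q.1) ∧ q.2 % 2 = 1 then p (2*q.1, 2*q.2-1) else false
def F11 (N n' : ℕ) (p : ℕ × ℕ → Bool) : ℕ × ℕ → Bool := fun q =>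
  if q.1 < n' ∧ q.2 ≤ 2*(n'-1-q.1) ∧ q.2 % 2 = 1 then
    (if q.1 = 0 then (if q.2 + 1 ≤ N then p (0, 2*q.2-1) else p (0, 2*q.2-3))
     else p (2*q.1-1, 2*q.2-1)) else false
def F13 (N n' : ℕ) (p : ℕ × ℕ → Bool) : ℕ × ℕ → Bool := fun q =>
  if q.1 < n' ∧ q.2 ≤ 2*(n'-1-q.1) ∧ q.2 % 2 = 1 then
    (if q.1 = 0 then (if q.2 + 2 ≤ N then p (0, 2*q.2+1) else p (0, 2*q.2-1))
     else p (2*q.1-1, 2*q.2+1)) else false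

lemma keyF01 {N n' : ℕ} (hN : N = 2*n' ∨ N + 1 = 2*n') (r' t : ℕ) :
    F01 n' (downPattern N (2*r') (4*t+1)) = downPattern n' r' (2*t+1) := by
  funext q
  obtain ⟨κ, μ⟩ := q
  unfold F01 downPattern
  dsimp only
  by_cases hg : κ < n' ∧ μ ≤ 2*(n'-1-κ) ∧ μ % 2 = 1
  · obtain ⟨h1, h2, h3⟩ := hg
    obtain ⟨v, rfl⟩ : ∃ v, μ = 2*v+1 := ⟨μ/2, by omega⟩
    rw [if_pos ⟨h1, h2, h3⟩, if_pos (by omega), if_pos (by omega)]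
    rw [show 4*t+1 + 2*(2*κ+1) + (2*(2*v+1)-1) = 2*(2*(t+κ+v+1)) by omega,
      show 2*r' + (2*κ+1) = 2*(r'+κ)+1 by omega,
      show 2*t+1 + 2*κ + (2*v+1) = 2*(t+κ+v+1) by omega,
      filled_oe, filled_two]
  · rw [if_neg hg]
    by_cases hg2 : κ < n' ∧ μ ≤ 2*(n'-1-κ)
    · rw [if_pos hg2, filled_odd_col (by omega)]
    · rw [if_neg hg2]

lemma keyF03 {N n' : ℕ} (hN : N + 2 = 2*n' ∨ N + 1 = 2*n') (r' t : ℕ) :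
    F03 n' (downPattern N (2*r') (4*t+3)) = downPattern n' r' (2*t+1) := by
  funext q
  obtain ⟨κ, μ⟩ := q
  unfold F03 downPattern
  dsimp only
  by_cases hg : κ < n' ∧ μ ≤ 2*(n'-1-κ) ∧ μ % 2 = 1
  · obtain ⟨h1, h2, h3⟩ := hg
    obtain ⟨v, rfl⟩ : ∃ v, μ = 2*v+1 := ⟨μ/2, by omega⟩
    rw [if_pos ⟨h1, h2, h3⟩, if_pos (by omega), if_pos (by omega)]
    rw [show 4*t+3 + 2*(2*κ) + (2*(2*v+1)-1) = 2*(2*(t+κ+v+1)) by omega,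
      show 2*r' + 2*κ = 2*(r'+κ) by omega,
      show 2*t+1 + 2*κ + (2*v+1) = 2*(t+κ+v+1) by omega,
      filled_ee, filled_two]
  · rw [if_neg hg]
    by_cases hg2 : κ < n' ∧ μ ≤ 2*(n'-1-κ)
    · rw [if_pos hg2, filled_odd_col (by omega)]
    · rw [if_neg hg2]

lemma keyF11 {N n' : ℕ} (hN : N + 2 = 2*n' ∨ N + 3 = 2*n') (hN4 : 4 ≤ N) (r' t : ℕ) :
    F11 N n' (downPattern N (2*r'+1) (4*t+5)) = downPattern n' r' (2*t+1) := by
  funext q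
  obtain ⟨κ, μ⟩ := q
  unfold F11 downPattern
  dsimp only
  by_cases hg : κ < n' ∧ μ ≤ 2*(n'-1-κ) ∧ μ % 2 = 1
  · obtain ⟨h1, h2, h3⟩ := hg
    obtain ⟨v, rfl⟩ : ∃ v, μ = 2*v+1 := ⟨μ/2, by omega⟩
    rw [if_pos ⟨h1, h2, h3⟩,
      if_pos (show κ < n' ∧ 2*v+1 ≤ 2*(n'-1-κ) from ⟨h1, h2⟩)]
    rcases Nat.eq_zero_or_pos κ with hκ | hκ
    · subst hκ
      rw [if_pos (show (0:ℕ) = 0 from rfl)]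
      by_cases hb : 2*v+1 + 1 ≤ N
      · rw [if_pos hb,
          if_pos (show 0 < N ∧ 2*(2*v+1)-1 ≤ 2*(N-1-0) by omega)]
        rw [show 4*t+5 + 2*0 + (2*(2*v+1)-1) = 2*(2*(t+v+1)+1) by omega,
          show 2*t+1 + 2*0 + (2*v+1) = 2*(t+v+1) by omega,
          show 2*r'+1+0 = 2*r'+1 by omega, show r'+0 = r' by omega,
          filled_oo, filled_two]
      · -- only possible when N odd, μ = N
        obtain ⟨w, hw1, hw2, hw3⟩ : ∃ w, N = 2*w+1 ∧ v = w ∧ n' = w+2 := by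
          refine ⟨(N-1)/2, by omega, by omega, by omega⟩
        subst hw1 hw2 hw3
        rw [if_neg hb,
          if_pos (show 0 < 2*v+1 ∧ 2*(2*v+1)-3 ≤ 2*(2*v+1-1-0) by omega)]
        rw [show 4*t+5 + 2*0 + (2*(2*v+1)-3) = 2*(2*(t+v+1)) by omega,
          show 2*t+1 + 2*0 + (2*v+1) = 2*(t+v+1) by omega,
          show 2*r'+1+0 = 2*r'+1 by omega, show r'+0 = r' by omega,
          filled_oe, filled_two]
    · obtain ⟨κ', rfl⟩ : ∃ κ', κ = κ'+1 := ⟨κ-1, by omega⟩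
      rw [if_neg (show ¬(κ'+1 = 0) by omega),
        if_pos (show 2*(κ'+1)-1 < N ∧ 2*(2*v+1)-1 ≤ 2*(N-1-(2*(κ'+1)-1)) by omega)]
      rw [show 4*t+5 + 2*(2*(κ'+1)-1) + (2*(2*v+1)-1) = 2*(2*(t+κ'+v+2)) by omega,
        show 2*r'+1 + (2*(κ'+1)-1) = 2*(r'+κ'+1) by omega,
        show 2*t+1 + 2*(κ'+1) + (2*v+1) = 2*(t+κ'+v+2) by omega,
        show r' + (κ'+1) = r'+κ'+1 by omega,
        filled_ee, filled_two]
  · rw [if_neg hg]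
    by_cases hg2 : κ < n' ∧ μ ≤ 2*(n'-1-κ)
    · rw [if_pos hg2, filled_odd_col (by omega)]
    · rw [if_neg hg2]

lemma keyF13 {N n' : ℕ} (hN : N + 2 = 2*n' ∨ N + 1 = 2*n') (hN4 : 4 ≤ N) (r' t : ℕ) :
    F13 N n' (downPattern N (2*r'+1) (4*t+3)) = downPattern n' r' (2*t+1) := by
  funext q
  obtain ⟨κ, μ⟩ := q
  unfold F13 downPattern
  dsimp only
  by_cases hg : κ < n' ∧ μ ≤ 2*(n'-1-κ) ∧ μ % 2 = 1
  · obtain ⟨h1, h2, h3⟩ := hg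
    obtain ⟨v, rfl⟩ : ∃ v, μ = 2*v+1 := ⟨μ/2, by omega⟩
    rw [if_pos ⟨h1, h2, h3⟩,
      if_pos (show κ < n' ∧ 2*v+1 ≤ 2*(n'-1-κ) from ⟨h1, h2⟩)]
    rcases Nat.eq_zero_or_pos κ with hκ | hκ
    · subst hκ
      rw [if_pos (show (0:ℕ) = 0 from rfl)]
      by_cases hb : 2*v+1 + 2 ≤ N
      · rw [if_pos hb,
          if_pos (show 0 < N ∧ 2*(2*v+1)+1 ≤ 2*(N-1-0) by omega)]
        rw [show 4*t+3 + 2*0 + (2*(2*v+1)+1) = 2*(2*(t+v+1)+1) by omega,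
          show 2*t+1 + 2*0 + (2*v+1) = 2*(t+v+1) by omega,
          show 2*r'+1+0 = 2*r'+1 by omega, show r'+0 = r' by omega,
          filled_oo, filled_two]
      · -- only possible when N even, μ = N-1
        obtain ⟨w, hw1, hw2, hw3⟩ : ∃ w, N = 2*w+2 ∧ v = w ∧ n' = w+2 := by
          refine ⟨(N-2)/2, by omega, by omega, by omega⟩
        subst hw1 hw2 hw3
        rw [if_neg hb,
          if_pos (show 0 < 2*v+2 ∧ 2*(2*v+1)-1 ≤ 2*(2*v+2-1-0) by omega)]
        rw [show 4*t+3 + 2*0 + (2*(2*v+1)-1) = 2*(2*(t+v+1)) by omega,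
          show 2*t+1 + 2*0 + (2*v+1) = 2*(t+v+1) by omega,
          show 2*r'+1+0 = 2*r'+1 by omega, show r'+0 = r' by omega,
          filled_oe, filled_two]
    · obtain ⟨κ', rfl⟩ : ∃ κ', κ = κ'+1 := ⟨κ-1, by omega⟩
      rw [if_neg (show ¬(κ'+1 = 0) by omega),
        if_pos (show 2*(κ'+1)-1 < N ∧ 2*(2*v+1)+1 ≤ 2*(N-1-(2*(κ'+1)-1)) by omega)]
      rw [show 4*t+3 + 2*(2*(κ'+1)-1) + (2*(2*v+1)+1) = 2*(2*(t+κ'+v+2)) by omega,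
        show 2*r'+1 + (2*(κ'+1)-1) = 2*(r'+κ'+1) by omega,
        show 2*t+1 + 2*(κ'+1) + (2*v+1) = 2*(t+κ'+v+2) by omega,
        show r' + (κ'+1) = r'+κ'+1 by omega,
        filled_ee, filled_two]
  · rw [if_neg hg]
    by_cases hg2 : κ < n' ∧ μ ≤ 2*(n'-1-κ)
    · rw [if_pos hg2, filled_odd_col (by omega)]
    · rw [if_neg hg2]

/-- expansion maps: reconstruct the big pattern from the half pattern -/
def G01 (N n' : ℕ) (p : ℕ × ℕ → Bool) : ℕ × ℕ → Bool := fun q =>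
  if q.1 < N ∧ q.2 ≤ 2*(N-1-q.1) ∧ q.2 % 2 = 1 then
    (if q.1 % 2 = 0 then (if q.2 % 4 = 3 then p (q.1/2, (q.2-1)/2) else false)
     else (if q.2 % 4 = 1 then p (q.1/2, (q.2+1)/2) else p (q.1/2, (q.2-1)/2)))
  else false

lemma keyG01 {N n' : ℕ} (hN : N = 2*n' ∨ N + 1 = 2*n') (r' t : ℕ) :
    downPattern N (2*r') (4*t+1) = G01 N n' (downPattern n' r' (2*t+1)) := by
  funext q
  obtain ⟨k, m⟩ := q
  unfold G01 downPattern
  dsimp only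
  by_cases hbig : k < N ∧ m ≤ 2*(N-1-k)
  · rw [if_pos hbig]
    obtain ⟨hb1, hb2⟩ := hbig
    by_cases hm : m % 2 = 1
    · rw [if_pos ⟨hb1, hb2, hm⟩]
      obtain ⟨κ, hk | hk⟩ : ∃ κ, k = 2*κ ∨ k = 2*κ+1 := ⟨k/2, by omega⟩ <;>
        obtain ⟨s, hs | hs⟩ : ∃ s, m = 4*s+1 ∨ m = 4*s+3 := ⟨m/4, by omega⟩ <;>
        subst hk hs
      · -- k even, m ≡ 1 mod 4 : both false
        rw [if_pos (show (2*κ) % 2 = 0 by omega), if_neg (show ¬((4*s+1) % 4 = 3) by omega)]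
        rw [show 4*t+1 + 2*(2*κ) + (4*s+1) = 2*(2*(t+κ+s)+1) by omega,
          show 2*r' + 2*κ = 2*(r'+κ) by omega, filled_eo]
      · -- k even, m ≡ 3 mod 4
        rw [if_pos (show (2*κ) % 2 = 0 by omega), if_pos (show (4*s+3) % 4 = 3 by omega)]
        rw [show (2*κ)/2 = κ by omega, show (4*s+3-1)/2 = 2*s+1 by omega,
          if_pos (show κ < n' ∧ 2*s+1 ≤ 2*(n'-1-κ) by omega),
          show 4*t+1 + 2*(2*κ) + (4*s+3) = 2*(2*(t+κ+s+1)) by omega,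
          show 2*r' + 2*κ = 2*(r'+κ) by omega,
          show 2*t+1 + 2*κ + (2*s+1) = 2*(t+κ+s+1) by omega,
          filled_ee, filled_two]
      · -- k odd, m ≡ 1 mod 4
        rw [if_neg (show ¬((2*κ+1) % 2 = 0) by omega), if_pos (show (4*s+1) % 4 = 1 by omega)]
        rw [show (2*κ+1)/2 = κ by omega, show (4*s+1+1)/2 = 2*s+1 by omega,
          if_pos (show κ < n' ∧ 2*s+1 ≤ 2*(n'-1-κ) by omega),
          show 4*t+1 + 2*(2*κ+1) + (4*s+1) = 2*(2*(t+κ+s+1)) by omega,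
          show 2*r' + (2*κ+1) = 2*(r'+κ)+1 by omega,
          show 2*t+1 + 2*κ + (2*s+1) = 2*(t+κ+s+1) by omega,
          filled_oe, filled_two]
      · -- k odd, m ≡ 3 mod 4
        rw [if_neg (show ¬((2*κ+1) % 2 = 0) by omega), if_neg (show ¬((4*s+3) % 4 = 1) by omega)]
        rw [show (2*κ+1)/2 = κ by omega, show (4*s+3-1)/2 = 2*s+1 by omega,
          if_pos (show κ < n' ∧ 2*s+1 ≤ 2*(n'-1-κ) by omega),
          show 4*t+1 + 2*(2*κ+1) + (4*s+3) = 2*(2*(t+κ+s+1)+1) by omega,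
          show 2*r' + (2*κ+1) = 2*(r'+κ)+1 by omega,
          show 2*t+1 + 2*κ + (2*s+1) = 2*(t+κ+s+1) by omega,
          filled_oo, filled_two]
    · rw [if_neg (show ¬(k < N ∧ m ≤ 2*(N-1-k) ∧ m % 2 = 1) by tauto),
        filled_odd_col (show (4*t+1 + 2*k + m) % 2 = 1 by omega)]
  · rw [if_neg hbig, if_neg (show ¬(k < N ∧ m ≤ 2*(N-1-k) ∧ m % 2 = 1) by tauto)]

def G03 (N n' : ℕ) (p : ℕ × ℕ → Bool) : ℕ × ℕ → Bool := fun q =>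
  if q.1 < N ∧ q.2 ≤ 2*(N-1-q.1) ∧ q.2 % 2 = 1 then
    (if q.1 % 2 = 0 then (if q.2 % 4 = 1 then p (q.1/2, (q.2+1)/2) else false)
     else (if q.2 % 4 = 3 then p (q.1/2, (q.2+3)/2) else p (q.1/2, (q.2+1)/2)))
  else false

lemma keyG03 {N n' : ℕ} (hN : N + 2 = 2*n' ∨ N + 1 = 2*n') (r' t : ℕ) :
    downPattern N (2*r') (4*t+3) = G03 N n' (downPattern n' r' (2*t+1)) := by
  funext q
  obtain ⟨k, m⟩ := q
  unfold G03 downPattern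
  dsimp only
  by_cases hbig : k < N ∧ m ≤ 2*(N-1-k)
  · rw [if_pos hbig]
    obtain ⟨hb1, hb2⟩ := hbig
    by_cases hm : m % 2 = 1
    · rw [if_pos ⟨hb1, hb2, hm⟩]
      obtain ⟨κ, hk | hk⟩ : ∃ κ, k = 2*κ ∨ k = 2*κ+1 := ⟨k/2, by omega⟩ <;>
        obtain ⟨s, hs | hs⟩ : ∃ s, m = 4*s+1 ∨ m = 4*s+3 := ⟨m/4, by omega⟩ <;>
        subst hk hs
      · rw [if_pos (show (2*κ) % 2 = 0 by omega), if_pos (show (4*s+1) % 4 = 1 by omega)]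
        rw [show (2*κ)/2 = κ by omega, show (4*s+1+1)/2 = 2*s+1 by omega,
          if_pos (show κ < n' ∧ 2*s+1 ≤ 2*(n'-1-κ) by omega),
          show 4*t+3 + 2*(2*κ) + (4*s+1) = 2*(2*(t+κ+s+1)) by omega,
          show 2*r' + 2*κ = 2*(r'+κ) by omega,
          show 2*t+1 + 2*κ + (2*s+1) = 2*(t+κ+s+1) by omega,
          filled_ee, filled_two]
      · rw [if_pos (show (2*κ) % 2 = 0 by omega), if_neg (show ¬((4*s+3) % 4 = 1) by omega)]
        rw [show 4*t+3 + 2*(2*κ) + (4*s+3) = 2*(2*(t+κ+s+1)+1) by omega,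
          show 2*r' + 2*κ = 2*(r'+κ) by omega, filled_eo]
      · rw [if_neg (show ¬((2*κ+1) % 2 = 0) by omega), if_neg (show ¬((4*s+1) % 4 = 3) by omega)]
        rw [show (2*κ+1)/2 = κ by omega, show (4*s+1+1)/2 = 2*s+1 by omega,
          if_pos (show κ < n' ∧ 2*s+1 ≤ 2*(n'-1-κ) by omega),
          show 4*t+3 + 2*(2*κ+1) + (4*s+1) = 2*(2*(t+κ+s+1)+1) by omega,
          show 2*r' + (2*κ+1) = 2*(r'+κ)+1 by omega,
          show 2*t+1 + 2*κ + (2*s+1) = 2*(t+κ+s+1) by omega,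
          filled_oo, filled_two]
      · rw [if_neg (show ¬((2*κ+1) % 2 = 0) by omega), if_pos (show (4*s+3) % 4 = 3 by omega)]
        rw [show (2*κ+1)/2 = κ by omega, show (4*s+3+3)/2 = 2*s+3 by omega,
          if_pos (show κ < n' ∧ 2*s+3 ≤ 2*(n'-1-κ) by omega),
          show 4*t+3 + 2*(2*κ+1) + (4*s+3) = 2*(2*(t+κ+s+2)) by omega,
          show 2*r' + (2*κ+1) = 2*(r'+κ)+1 by omega,
          show 2*t+1 + 2*κ + (2*s+3) = 2*(t+κ+s+2) by omega,
          filled_oe, filled_two]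
    · rw [if_neg (show ¬(k < N ∧ m ≤ 2*(N-1-k) ∧ m % 2 = 1) by tauto),
        filled_odd_col (show (4*t+3 + 2*k + m) % 2 = 1 by omega)]
  · rw [if_neg hbig, if_neg (show ¬(k < N ∧ m ≤ 2*(N-1-k) ∧ m % 2 = 1) by tauto)]

def G11 (N n' : ℕ) (p : ℕ × ℕ → Bool) : ℕ × ℕ → Bool := fun q =>
  if q.1 < N ∧ q.2 ≤ 2*(N-1-q.1) ∧ q.2 % 2 = 1 then
    (if q.1 % 2 = 0 then (if q.2 % 4 = 3 then p (q.1/2, (q.2+3)/2) else p (q.1/2, (q.2+1)/2))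
     else (if q.2 % 4 = 1 then p (q.1/2+1, (q.2+1)/2) else false))
  else false

lemma keyG11 {N n' : ℕ} (hN : N + 2 = 2*n' ∨ N + 3 = 2*n') (r' t : ℕ) :
    downPattern N (2*r'+1) (4*t+5) = G11 N n' (downPattern n' r' (2*t+1)) := by
  funext q
  obtain ⟨k, m⟩ := q
  unfold G11 downPattern
  dsimp only
  by_cases hbig : k < N ∧ m ≤ 2*(N-1-k)
  · rw [if_pos hbig]
    obtain ⟨hb1, hb2⟩ := hbig
    by_cases hm : m % 2 = 1
    · rw [if_pos ⟨hb1, hb2, hm⟩]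
      obtain ⟨κ, hk | hk⟩ : ∃ κ, k = 2*κ ∨ k = 2*κ+1 := ⟨k/2, by omega⟩ <;>
        obtain ⟨s, hs | hs⟩ : ∃ s, m = 4*s+1 ∨ m = 4*s+3 := ⟨m/4, by omega⟩ <;>
        subst hk hs
      · rw [if_pos (show (2*κ) % 2 = 0 by omega), if_neg (show ¬((4*s+1) % 4 = 3) by omega)]
        rw [show (2*κ)/2 = κ by omega, show (4*s+1+1)/2 = 2*s+1 by omega,
          if_pos (show κ < n' ∧ 2*s+1 ≤ 2*(n'-1-κ) by omega),
          show 4*t+5 + 2*(2*κ) + (4*s+1) = 2*(2*(t+κ+s+1)+1) by omega,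
          show 2*r'+1 + 2*κ = 2*(r'+κ)+1 by omega,
          show 2*t+1 + 2*κ + (2*s+1) = 2*(t+κ+s+1) by omega,
          filled_oo, filled_two]
      · rw [if_pos (show (2*κ) % 2 = 0 by omega), if_pos (show (4*s+3) % 4 = 3 by omega)]
        rw [show (2*κ)/2 = κ by omega, show (4*s+3+3)/2 = 2*s+3 by omega,
          if_pos (show κ < n' ∧ 2*s+3 ≤ 2*(n'-1-κ) by omega),
          show 4*t+5 + 2*(2*κ) + (4*s+3) = 2*(2*(t+κ+s+2)) by omega,
          show 2*r'+1 + 2*κ = 2*(r'+κ)+1 by omega,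
          show 2*t+1 + 2*κ + (2*s+3) = 2*(t+κ+s+2) by omega,
          filled_oe, filled_two]
      · rw [if_neg (show ¬((2*κ+1) % 2 = 0) by omega), if_pos (show (4*s+1) % 4 = 1 by omega)]
        rw [show (2*κ+1)/2+1 = κ+1 by omega, show (4*s+1+1)/2 = 2*s+1 by omega,
          if_pos (show κ+1 < n' ∧ 2*s+1 ≤ 2*(n'-1-(κ+1)) by omega),
          show 4*t+5 + 2*(2*κ+1) + (4*s+1) = 2*(2*(t+κ+s+2)) by omega,
          show 2*r'+1 + (2*κ+1) = 2*(r'+κ+1) by omega,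
          show 2*t+1 + 2*(κ+1) + (2*s+1) = 2*(t+κ+s+2) by omega,
          show r' + (κ+1) = r'+κ+1 by omega,
          filled_ee, filled_two]
      · rw [if_neg (show ¬((2*κ+1) % 2 = 0) by omega), if_neg (show ¬((4*s+3) % 4 = 1) by omega)]
        rw [show 4*t+5 + 2*(2*κ+1) + (4*s+3) = 2*(2*(t+κ+s+2)+1) by omega,
          show 2*r'+1 + (2*κ+1) = 2*(r'+κ+1) by omega, filled_eo]
    · rw [if_neg (show ¬(k < N ∧ m ≤ 2*(N-1-k) ∧ m % 2 = 1) by tauto),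
        filled_odd_col (show (4*t+5 + 2*k + m) % 2 = 1 by omega)]
  · rw [if_neg hbig, if_neg (show ¬(k < N ∧ m ≤ 2*(N-1-k) ∧ m % 2 = 1) by tauto)]

def G13 (N n' : ℕ) (p : ℕ × ℕ → Bool) : ℕ × ℕ → Bool := fun q =>
  if q.1 < N ∧ q.2 ≤ 2*(N-1-q.1) ∧ q.2 % 2 = 1 then
    (if q.1 % 2 = 0 then (if q.2 % 4 = 1 then p (q.1/2, (q.2+1)/2) else p (q.1/2, (q.2-1)/2))
     else (if q.2 % 4 = 3 then p (q.1/2+1, (q.2-1)/2) else false))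
  else false

lemma keyG13 {N n' : ℕ} (hN : N + 2 = 2*n' ∨ N + 1 = 2*n') (r' t : ℕ) :
    downPattern N (2*r'+1) (4*t+3) = G13 N n' (downPattern n' r' (2*t+1)) := by
  funext q
  obtain ⟨k, m⟩ := q
  unfold G13 downPattern
  dsimp only
  by_cases hbig : k < N ∧ m ≤ 2*(N-1-k)
  · rw [if_pos hbig]
    obtain ⟨hb1, hb2⟩ := hbig
    by_cases hm : m % 2 = 1
    · rw [if_pos ⟨hb1, hb2, hm⟩]
      obtain ⟨κ, hk | hk⟩ : ∃ κ, k = 2*κ ∨ k = 2*κ+1 := ⟨k/2, by omega⟩ <;>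
        obtain ⟨s, hs | hs⟩ : ∃ s, m = 4*s+1 ∨ m = 4*s+3 := ⟨m/4, by omega⟩ <;>
        subst hk hs
      · rw [if_pos (show (2*κ) % 2 = 0 by omega), if_pos (show (4*s+1) % 4 = 1 by omega)]
        rw [show (2*κ)/2 = κ by omega, show (4*s+1+1)/2 = 2*s+1 by omega,
          if_pos (show κ < n' ∧ 2*s+1 ≤ 2*(n'-1-κ) by omega),
          show 4*t+3 + 2*(2*κ) + (4*s+1) = 2*(2*(t+κ+s+1)) by omega,
          show 2*r'+1 + 2*κ = 2*(r'+κ)+1 by omega,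
          show 2*t+1 + 2*κ + (2*s+1) = 2*(t+κ+s+1) by omega,
          filled_oe, filled_two]
      · rw [if_pos (show (2*κ) % 2 = 0 by omega), if_neg (show ¬((4*s+3) % 4 = 1) by omega)]
        rw [show (2*κ)/2 = κ by omega, show (4*s+3-1)/2 = 2*s+1 by omega,
          if_pos (show κ < n' ∧ 2*s+1 ≤ 2*(n'-1-κ) by omega),
          show 4*t+3 + 2*(2*κ) + (4*s+3) = 2*(2*(t+κ+s+1)+1) by omega,
          show 2*r'+1 + 2*κ = 2*(r'+κ)+1 by omega,
          show 2*t+1 + 2*κ + (2*s+1) = 2*(t+κ+s+1) by omega,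
          filled_oo, filled_two]
      · rw [if_neg (show ¬((2*κ+1) % 2 = 0) by omega), if_neg (show ¬((4*s+1) % 4 = 3) by omega)]
        rw [show 4*t+3 + 2*(2*κ+1) + (4*s+1) = 2*(2*(t+κ+s+1)+1) by omega,
          show 2*r'+1 + (2*κ+1) = 2*(r'+κ+1) by omega, filled_eo]
      · rw [if_neg (show ¬((2*κ+1) % 2 = 0) by omega), if_pos (show (4*s+3) % 4 = 3 by omega)]
        rw [show (2*κ+1)/2+1 = κ+1 by omega, show (4*s+3-1)/2 = 2*s+1 by omega,
          if_pos (show κ+1 < n' ∧ 2*s+1 ≤ 2*(n'-1-(κ+1)) by omega),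
          show 4*t+3 + 2*(2*κ+1) + (4*s+3) = 2*(2*(t+κ+s+2)) by omega,
          show 2*r'+1 + (2*κ+1) = 2*(r'+κ+1) by omega,
          show 2*t+1 + 2*(κ+1) + (2*s+1) = 2*(t+κ+s+2) by omega,
          show r' + (κ+1) = r'+κ+1 by omega,
          filled_ee, filled_two]
    · rw [if_neg (show ¬(k < N ∧ m ≤ 2*(N-1-k) ∧ m % 2 = 1) by tauto),
        filled_odd_col (show (4*t+3 + 2*k + m) % 2 = 1 by omega)]
  · rw [if_neg hbig, if_neg (show ¬(k < N ∧ m ≤ 2*(N-1-k) ∧ m % 2 = 1) by tauto)]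

/-- representation lemmas -/
lemma rep01 {N : ℕ} {p} (hp : p ∈ PdownRC N 0 1) :
    ∃ r' t, p = downPattern N (2*r') (4*t+1) := by
  obtain ⟨r, c, hc2, hval, hr, hc4, rfl⟩ := hp
  exact ⟨r/2, c/4, by rw [show 2*(r/2) = r by omega, show 4*(c/4)+1 = c by omega]⟩

lemma rep03 {N : ℕ} {p} (hp : p ∈ PdownRC N 0 3) :
    ∃ r' t, p = downPattern N (2*r') (4*t+3) := by
  obtain ⟨r, c, hc2, hval, hr, hc4, rfl⟩ := hp
  exact ⟨r/2, c/4, by rw [show 2*(r/2) = r by omega, show 4*(c/4)+3 = c by omega]⟩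

lemma rep13 {N : ℕ} {p} (hp : p ∈ PdownRC N 1 3) :
    ∃ r' t, p = downPattern N (2*r'+1) (4*t+3) := by
  obtain ⟨r, c, hc2, hval, hr, hc4, rfl⟩ := hp
  exact ⟨r/2, c/4, by rw [show 2*(r/2)+1 = r by omega, show 4*(c/4)+3 = c by omega]⟩

lemma rep11 {N : ℕ} {p} (hp : p ∈ PdownRC N 1 1) :
    ∃ r' t, p = downPattern N (2*r'+1) (4*t+5) := by
  obtain ⟨r, c, hc2, hval, hr, hc4, rfl⟩ := hp
  rcases Nat.lt_or_ge c 5 with hc5 | hc5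
  · -- c = 1: relocate to the right copy
    have hc1 : c = 1 := by omega
    subst hc1
    set K := r + 3*N + 1 with hK
    have h2 : K < 2^K := Nat.lt_two_pow_self (n := K)
    have h2' : (2:ℕ)^(K+1) = 2*2^K := by ring
    obtain ⟨u, hu⟩ : ∃ u, 2^K = 2*u+2 := ⟨(2^K - 2)/2, by
      have : 2 ≤ K := by omega
      have : (2:ℕ)^2 ∣ 2^K := pow_dvd_pow 2 this
      omega⟩
    refine ⟨u + r/2 + 1, u, ?_⟩
    have hrel := reloc_right (n := N) (r := r) (c := 1) (K := K) (by omega) (by omega)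
    rw [show 2*(u + r/2 + 1)+1 = 2^K + r by omega,
      show 4*u+5 = 2^(K+1)+1 by omega]
    exact hrel.symm
  · exact ⟨r/2, (c-5)/4, by rw [show 2*(r/2)+1 = r by omega, show 4*((c-5)/4)+5 = c by omega]⟩

lemma card01 {N n' : ℕ} (hN : N = 2*n' ∨ N + 1 = 2*n') :
    (PdownRC N 0 1).ncard = (Pdown n').ncard := by
  have himg : F01 n' '' (PdownRC N 0 1) = Pdown n' := by
    apply Set.Subset.antisymm
    · rintro p ⟨q, hq, rfl⟩
      obtain ⟨r', t, rfl⟩ := rep01 hq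
      rw [keyF01 hN r' t]
      exact downPattern_mem_Pdown (by omega)
    · rintro p ⟨r'', c'', hc2, hval, rfl⟩
      obtain ⟨t, rfl⟩ : ∃ t, c'' = 2*t+1 := ⟨c''/2, by omega⟩
      set K := r'' + n' + t + N + 1 with hK
      have h2 : K < 2^K := Nat.lt_two_pow_self (n := K)
      have h2' : (2:ℕ)^(K+1) = 2*2^K := by ring
      refine ⟨downPattern N (2*(2^K + r'')) (4*t+1),
        ⟨2*(2^K + r''), 4*t+1, by omega, by omega, by omega, by omega, rfl⟩, ?_⟩
      rw [keyF01 hN (2^K + r'') t, reloc_left (by omega) (by omega)]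
  have hinj : Set.InjOn (F01 n') (PdownRC N 0 1) := by
    intro p hp p' hp' heq
    obtain ⟨r1, t1, rfl⟩ := rep01 hp
    obtain ⟨r2, t2, rfl⟩ := rep01 hp'
    rw [keyG01 hN r1 t1, ← keyF01 hN r1 t1, heq, keyF01 hN r2 t2, ← keyG01 hN r2 t2]
  rw [← himg, Set.ncard_image_of_injOn hinj]

lemma card03 {N n' : ℕ} (hN : N + 2 = 2*n' ∨ N + 1 = 2*n') :
    (PdownRC N 0 3).ncard = (Pdown n').ncard := by
  have himg : F03 n' '' (PdownRC N 0 3) = Pdown n' := by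
    apply Set.Subset.antisymm
    · rintro p ⟨q, hq, rfl⟩
      obtain ⟨r', t, rfl⟩ := rep03 hq
      rw [keyF03 hN r' t]
      exact downPattern_mem_Pdown (by omega)
    · rintro p ⟨r'', c'', hc2, hval, rfl⟩
      obtain ⟨t, rfl⟩ : ∃ t, c'' = 2*t+1 := ⟨c''/2, by omega⟩
      set K := r'' + n' + t + N + 1 with hK
      have h2 : K < 2^K := Nat.lt_two_pow_self (n := K)
      have h2' : (2:ℕ)^(K+1) = 2*2^K := by ring
      refine ⟨downPattern N (2*(2^K + r'')) (4*t+3),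
        ⟨2*(2^K + r''), 4*t+3, by omega, by omega, by omega, by omega, rfl⟩, ?_⟩
      rw [keyF03 hN (2^K + r'') t, reloc_left (by omega) (by omega)]
  have hinj : Set.InjOn (F03 n') (PdownRC N 0 3) := by
    intro p hp p' hp' heq
    obtain ⟨r1, t1, rfl⟩ := rep03 hp
    obtain ⟨r2, t2, rfl⟩ := rep03 hp'
    rw [keyG03 hN r1 t1, ← keyF03 hN r1 t1, heq, keyF03 hN r2 t2, ← keyG03 hN r2 t2]
  rw [← himg, Set.ncard_image_of_injOn hinj]

lemma card11 {N n' : ℕ} (hN : N + 2 = 2*n' ∨ N + 3 = 2*n') (hN4 : 4 ≤ N) :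
    (PdownRC N 1 1).ncard = (Pdown n').ncard := by
  have himg : F11 N n' '' (PdownRC N 1 1) = Pdown n' := by
    apply Set.Subset.antisymm
    · rintro p ⟨q, hq, rfl⟩
      obtain ⟨r', t, rfl⟩ := rep11 hq
      rw [keyF11 hN hN4 r' t]
      exact downPattern_mem_Pdown (by omega)
    · rintro p ⟨r'', c'', hc2, hval, rfl⟩
      obtain ⟨t, rfl⟩ : ∃ t, c'' = 2*t+1 := ⟨c''/2, by omega⟩
      set K := r'' + n' + t + N + 1 with hK
      have h2 : K < 2^K := Nat.lt_two_pow_self (n := K)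
      have h2' : (2:ℕ)^(K+1) = 2*2^K := by ring
      refine ⟨downPattern N (2*(2^K + r'')+1) (4*t+5),
        ⟨2*(2^K + r'')+1, 4*t+5, by omega, by omega, by omega, by omega, rfl⟩, ?_⟩
      rw [keyF11 hN hN4 (2^K + r'') t, reloc_left (by omega) (by omega)]
  have hinj : Set.InjOn (F11 N n') (PdownRC N 1 1) := by
    intro p hp p' hp' heq
    obtain ⟨r1, t1, rfl⟩ := rep11 hp
    obtain ⟨r2, t2, rfl⟩ := rep11 hp'
    rw [keyG11 hN r1 t1, ← keyF11 hN hN4 r1 t1, heq, keyF11 hN hN4 r2 t2, ← keyG11 hN r2 t2]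
  rw [← himg, Set.ncard_image_of_injOn hinj]

lemma card13 {N n' : ℕ} (hN : N + 2 = 2*n' ∨ N + 1 = 2*n') (hN4 : 4 ≤ N) :
    (PdownRC N 1 3).ncard = (Pdown n').ncard := by
  have himg : F13 N n' '' (PdownRC N 1 3) = Pdown n' := by
    apply Set.Subset.antisymm
    · rintro p ⟨q, hq, rfl⟩
      obtain ⟨r', t, rfl⟩ := rep13 hq
      rw [keyF13 hN hN4 r' t]
      exact downPattern_mem_Pdown (by omega)
    · rintro p ⟨r'', c'', hc2, hval, rfl⟩
      obtain ⟨t, rfl⟩ : ∃ t, c'' = 2*t+1 := ⟨c''/2, by omega⟩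
      set K := r'' + n' + t + N + 1 with hK
      have h2 : K < 2^K := Nat.lt_two_pow_self (n := K)
      have h2' : (2:ℕ)^(K+1) = 2*2^K := by ring
      refine ⟨downPattern N (2*(2^K + r'')+1) (4*t+3),
        ⟨2*(2^K + r'')+1, 4*t+3, by omega, by omega, by omega, by omega, rfl⟩, ?_⟩
      rw [keyF13 hN hN4 (2^K + r'') t, reloc_left (by omega) (by omega)]
  have hinj : Set.InjOn (F13 N n') (PdownRC N 1 3) := by
    intro p hp p' hp' heq
    obtain ⟨r1, t1, rfl⟩ := rep13 hp
    obtain ⟨r2, t2, rfl⟩ := rep13 hp'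
    rw [keyG13 hN r1 t1, ← keyF13 hN hN4 r1 t1, heq, keyF13 hN hN4 r2 t2, ← keyG13 hN r2 t2]
  rw [← himg, Set.ncard_image_of_injOn hinj]

lemma pat_cell {N r c : ℕ} (hc : c % 2 = 1) {k i : ℕ} (hk : k < N)
    (hi : 2*i+1 ≤ 2*(N-1-k)) :
    downPattern N r c (k, 2*i+1) = decide (chi (r+k) ((c+1)/2+k+i) = 1) := by
  unfold downPattern
  dsimp only
  rw [if_pos ⟨hk, hi⟩, show c + 2*k + (2*i+1) = 2*((c+1)/2+k+i) by omega, filled_two]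

lemma pat_extract {N r c r' c' : ℕ} (hc : c % 2 = 1) (hc' : c' % 2 = 1)
    (heq : downPattern N r c = downPattern N r' c') :
    ∀ k i, k < N → 2*i+1 ≤ 2*(N-1-k) →
      chi (r+k) ((c+1)/2+k+i) = chi (r'+k) ((c'+1)/2+k+i) := by
  intro k i hk hi
  have h := congrFun heq (k, 2*i+1)
  rw [pat_cell hc hk hi, pat_cell hc' hk hi] at h
  have h2 := decide_eq_decide.mp h
  have := chi_le_one (r+k) ((c+1)/2+k+i)
  have := chi_le_one (r'+k) ((c'+1)/2+k+i)
  omega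

lemma eq_blank_of_zero {N r c : ℕ} (hc : c % 2 = 1)
    (hz : ∀ k i, k < N → 2*i+1 ≤ 2*(N-1-k) → chi (r+k) ((c+1)/2+k+i) = 0) :
    downPattern N r c = blankDown := by
  funext q
  obtain ⟨k, m⟩ := q
  unfold downPattern blankDown
  dsimp only
  split_ifs with h
  · rcases Nat.even_or_odd m with ⟨i, hm⟩ | ⟨i, hm⟩
    · exact filled_odd_col (by omega)
    · rw [show m = 2*i+1 by omega, show c + 2*k + (2*i+1) = 2*((c+1)/2+k+i) by omega,
        filled_two, hz k i h.1 (by omega)]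
      simp
  · rfl

lemma eq_topside {N r c : ℕ} (hc : c % 2 = 1) (hN : 2 ≤ N)
    (h0 : ∀ i, 2*i+1 ≤ 2*(N-1) → chi r ((c+1)/2+i) = 1)
    (hz : ∀ k i, 1 ≤ k → k < N → 2*i+1 ≤ 2*(N-1-k) → chi (r+k) ((c+1)/2+k+i) = 0) :
    downPattern N r c = topsideDown N := by
  funext q
  obtain ⟨k, m⟩ := q
  unfold downPattern topsideDown
  dsimp only
  split_ifs with h
  · rcases Nat.even_or_odd m with ⟨i, hm⟩ | ⟨i, hm⟩
    · rw [filled_odd_col (by omega)]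
      symm; simp; omega
    · rw [show m = 2*i+1 by omega, show c + 2*k + (2*i+1) = 2*((c+1)/2+k+i) by omega,
        filled_two]
      rcases Nat.eq_zero_or_pos k with hk0 | hk0
      · subst hk0
        rw [show r+0 = r by omega, show (c+1)/2+0+i = (c+1)/2+i by omega, h0 i (by omega)]
        symm; simp; omega
      · rw [hz k i hk0 h.1 (by omega)]
        symm; simp; omega
  · symm
    simp only [decide_eq_false_iff_not]
    rintro ⟨rfl, hm2, hm1, hm3⟩
    omega

lemma eq_leftside {N r c : ℕ} (hc : c % 2 = 1) (hN : 2 ≤ N)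
    (h0 : ∀ k, k ≤ N - 2 → chi (r+k) ((c+1)/2+k) = 1)
    (hz : ∀ k i, 1 ≤ i → k < N → 2*i+1 ≤ 2*(N-1-k) → chi (r+k) ((c+1)/2+k+i) = 0) :
    downPattern N r c = leftsideDown N := by
  funext q
  obtain ⟨k, m⟩ := q
  unfold downPattern leftsideDown
  dsimp only
  split_ifs with h
  · rcases Nat.even_or_odd m with ⟨i, hm⟩ | ⟨i, hm⟩
    · rw [filled_odd_col (by omega)]
      symm; simp; omega
    · rw [show m = 2*i+1 by omega, show c + 2*k + (2*i+1) = 2*((c+1)/2+k+i) by omega,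
        filled_two]
      rcases Nat.eq_zero_or_pos i with hi0 | hi0
      · subst hi0
        rw [show (c+1)/2+k+0 = (c+1)/2+k by omega, h0 k (by omega)]
        symm; simp; omega
      · rw [hz k i hi0 h.1 (by omega)]
        symm; simp; omega
  · symm
    simp only [decide_eq_false_iff_not]
    rintro ⟨rfl, hk⟩
    omega

lemma eq_rightside {N r c : ℕ} (hc : c % 2 = 1) (hN : 2 ≤ N)
    (h0 : ∀ k, k ≤ N - 2 → chi (r+k) ((c+1)/2+k+(N-2-k)) = 1)
    (hz : ∀ k i, k < N → 2*i+1 ≤ 2*(N-1-k) → i+1 ≤ N-2-k → chi (r+k) ((c+1)/2+k+i) = 0) :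
    downPattern N r c = rightsideDown N := by
  funext q
  obtain ⟨k, m⟩ := q
  unfold downPattern rightsideDown
  dsimp only
  split_ifs with h
  · rcases Nat.even_or_odd m with ⟨i, hm⟩ | ⟨i, hm⟩
    · rw [filled_odd_col (by omega)]
      symm; simp; omega
    · rw [show m = 2*i+1 by omega, show c + 2*k + (2*i+1) = 2*((c+1)/2+k+i) by omega,
        filled_two]
      rcases Nat.lt_or_ge i (N-2-k) with hi0 | hi0
      · rw [hz k i h.1 (by omega) (by omega)]
        symm; simp; omega
      · have hieq : i = N-2-k := by omega
        subst hieq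
        rw [h0 k (by omega)]
        symm; simp; omega
  · symm
    simp only [decide_eq_false_iff_not]
    rintro ⟨hk, hm⟩
    omega

lemma chi_even_odd {A j : ℕ} (hA : A % 2 = 0) (hj : j % 2 = 1) : chi A j = 0 := by
  obtain ⟨a, rfl⟩ : ∃ a, A = 2*a := ⟨A/2, by omega⟩
  obtain ⟨b, rfl⟩ : ∃ b, j = 2*b+1 := ⟨j/2, by omega⟩
  exact chi_eo a b

lemma chi_odd_pair {A j : ℕ} (hA : A % 2 = 1) (hj : j % 2 = 0) : chi A j = chi A (j+1) := by
  obtain ⟨a, rfl⟩ : ∃ a, A = 2*a+1 := ⟨A/2, by omega⟩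
  obtain ⟨b, rfl⟩ : ∃ b, j = 2*b := ⟨j/2, by omega⟩
  rw [chi_oe, chi_oo]

/-- kill lemma: an odd absolute row below a vanishing row vanishes -/
lemma kill {N r c : ℕ} (hc : c % 2 = 1) {k : ℕ} (hk1 : 1 ≤ k) (hkN : k < N)
    (hodd : (r+k) % 2 = 1)
    (hprev : ∀ i, 2*i+1 ≤ 2*(N-1-(k-1)) → chi (r+(k-1)) ((c+1)/2+(k-1)+i) = 0) :
    ∀ i, 2*i+1 ≤ 2*(N-1-k) → chi (r+k) ((c+1)/2+k+i) = 0 := by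
  intro i hi
  obtain ⟨A, hA⟩ : ∃ A, r+k = 2*A+1 := ⟨(r+k)/2, by omega⟩
  have he1 : 1 ≤ (c+1)/2 := by omega
  set j := (c+1)/2+k+i with hj
  have hprev2 : chi (2*A) (2*(j/2)) = 0 := by
    have h2 := hprev (2*(j/2) - ((c+1)/2+k-1)) (by omega)
    rw [show r+(k-1) = 2*A by omega,
      show (c+1)/2+(k-1)+(2*(j/2) - ((c+1)/2+k-1)) = 2*(j/2) by omega] at h2
    exact h2
  rcases Nat.even_or_odd j with ⟨B, hB⟩ | ⟨B, hB⟩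
  · rw [hA, show j = 2*B by omega, chi_oe]
    rw [show 2*(j/2) = 2*B by omega, chi_ee] at hprev2
    exact hprev2
  · rw [hA, show j = 2*B+1 by omega, chi_oo]
    rw [show 2*(j/2) = 2*B by omega, chi_ee] at hprev2
    exact hprev2

/-- Rigidity, both rows even, column classes differ: pattern is blank -/
lemma rigid_ee {N r c r' c' : ℕ} (hc : c % 2 = 1) (hc' : c' % 2 = 1)
    (hr : r % 2 = 0) (hr' : r' % 2 = 0) (hcc : ((c+1)/2 + (c'+1)/2) % 2 = 1)
    (heq : downPattern N r c = downPattern N r' c') :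
    downPattern N r c = blankDown := by
  have hext := pat_extract hc hc' heq
  have hz : ∀ k, k < N → ∀ i, 2*i+1 ≤ 2*(N-1-k) → chi (r+k) ((c+1)/2+k+i) = 0 := by
    intro k
    induction k using Nat.strong_induction_on with
    | _ k ih =>
      intro hk i hi
      rcases Nat.even_or_odd k with ⟨κ, hκ⟩ | ⟨κ, hκ⟩
      · rcases Nat.even_or_odd ((c+1)/2+k+i) with ⟨B, hB⟩ | ⟨B, hB⟩
        · rw [hext k i hk hi]
          exact chi_even_odd (by omega) (by omega)
        · exact chi_even_odd (by omega) (by omega)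
      · exact kill hc (by omega) hk (by omega)
          (fun i' hi' => ih (k-1) (by omega) (by omega) i' hi') i hi
  exact eq_blank_of_zero hc (fun k i hk hi => hz k hk i hi)

/-- Rigidity, both rows odd, column classes differ: blank or topside -/
lemma rigid_oo {N r c r' c' : ℕ} (hN : 4 ≤ N) (hc : c % 2 = 1) (hc' : c' % 2 = 1)
    (hr : r % 2 = 1) (hr' : r' % 2 = 1) (hcc : ((c+1)/2 + (c'+1)/2) % 2 = 1)
    (heq : downPattern N r c = downPattern N r' c') :
    downPattern N r c = blankDown ∨ downPattern N r c = topsideDown N := by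
  have hext := pat_extract hc hc' heq
  have hz : ∀ k, 1 ≤ k → k < N → ∀ i, 2*i+1 ≤ 2*(N-1-k) → chi (r+k) ((c+1)/2+k+i) = 0 := by
    intro k
    induction k using Nat.strong_induction_on with
    | _ k ih =>
      intro hk1 hk i hi
      rcases Nat.even_or_odd k with ⟨κ, hκ⟩ | ⟨κ, hκ⟩
      · -- k even ≥ 2 : kill via row k-1 (odd, handled by ih)
        exact kill hc (by omega) hk (by omega)
          (fun i' hi' => ih (k-1) (by omega) (by omega) (by omega) i' hi') i hi
      · -- k odd : clash
        rcases Nat.even_or_odd ((c+1)/2+k+i) with ⟨B, hB⟩ | ⟨B, hB⟩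
        · rw [hext k i hk hi]
          exact chi_even_odd (by omega) (by omega)
        · exact chi_even_odd (by omega) (by omega)
  have hconst : ∀ i, 2*i+1 ≤ 2*(N-1) → chi r ((c+1)/2+i) = chi r ((c+1)/2) := by
    intro i
    induction i with
    | zero => intro _; rfl
    | succ i ih2 =>
      intro hi
      have hstep : chi r ((c+1)/2+i) = chi r ((c+1)/2+(i+1)) := by
        rcases Nat.even_or_odd ((c+1)/2+i) with ⟨B, hB⟩ | ⟨B, hB⟩
        · rw [show (c+1)/2+(i+1) = ((c+1)/2+i)+1 by omega]
          exact chi_odd_pair hr (by omega)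
        · have e1 := hext 0 i (by omega) (by omega)
          have e2 := hext 0 (i+1) (by omega) (by omega)
          rw [show r+0 = r by omega] at e1 e2
          rw [show (c+1)/2+0+i = (c+1)/2+i by omega] at e1
          rw [show (c+1)/2+0+(i+1) = (c+1)/2+(i+1) by omega] at e2
          rw [e1, e2, show r'+0 = r' by omega,
            show (c'+1)/2+0+i = (c'+1)/2+i by omega,
            show (c'+1)/2+0+(i+1) = ((c'+1)/2+i)+1 by omega]
          exact chi_odd_pair hr' (by omega)
      rw [← hstep]
      exact ih2 (by omega)
  rcases Nat.eq_zero_or_pos (chi r ((c+1)/2)) with hv | hv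
  · left
    apply eq_blank_of_zero hc
    intro k i hk hi
    rcases Nat.eq_zero_or_pos k with hk0 | hk0
    · subst hk0
      rw [show r+0 = r by omega, show (c+1)/2+0+i = (c+1)/2+i by omega,
        hconst i (by omega), hv]
    · exact hz k hk0 hk i hi
  · right
    apply eq_topside hc (by omega)
    · intro i hi
      have := chi_le_one r ((c+1)/2)
      rw [hconst i (by omega)]
      omega
    · exact fun k i hk1 hk hi => hz k hk1 hk i hi

/-- Rigidity, row parities differ, column classes agree: blank or rightside -/
lemma rigid_me {N r c r' c' : ℕ} (hN : 4 ≤ N) (hc : c % 2 = 1) (hc' : c' % 2 = 1)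
    (hrr : (r + r') % 2 = 1) (hcc : ((c+1)/2 + (c'+1)/2) % 2 = 0)
    (heq : downPattern N r c = downPattern N r' c') :
    downPattern N r c = blankDown ∨ downPattern N r c = rightsideDown N := by
  have hext := pat_extract hc hc' heq
  -- cells whose column is odd vanish
  have hodd0 : ∀ k i, k < N → 2*i+1 ≤ 2*(N-1-k) → ((c+1)/2+k+i) % 2 = 1 →
      chi (r+k) ((c+1)/2+k+i) = 0 := by
    intro k i hk hi hj
    rcases Nat.even_or_odd (r+k) with ⟨A, hA⟩ | ⟨A, hA⟩
    · exact chi_even_odd (by omega) (by omega)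
    · rw [hext k i hk hi]
      exact chi_even_odd (by omega) (by omega)
  -- interior cells vanish
  have hzi : ∀ k i, k < N → i+1 ≤ N-2-k → chi (r+k) ((c+1)/2+k+i) = 0 := by
    intro k i hk hi
    rcases Nat.even_or_odd ((c+1)/2+k+i) with ⟨B, hB⟩ | ⟨B, hB⟩
    · -- column even: pair to the right then vanish
      rcases Nat.even_or_odd (r+k) with ⟨A, hA⟩ | ⟨A, hA⟩
      · -- r side even: r' side odd, pair on the r' side
        rw [hext k i hk (by omega), chi_odd_pair (by omega) (by omega),
          show (c'+1)/2+k+i+1 = (c'+1)/2+k+(i+1) by omega, ← hext k (i+1) hk (by omega)]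
        exact hodd0 k (i+1) hk (by omega) (by omega)
      · rw [chi_odd_pair (by omega) (by omega),
          show (c+1)/2+k+i+1 = (c+1)/2+k+(i+1) by omega]
        exact hodd0 k (i+1) hk (by omega) (by omega)
    · exact hodd0 k i hk (by omega) (by omega)
  rcases Nat.even_or_odd ((c+1)/2+N) with ⟨E, hE⟩ | ⟨E, hE⟩
  · -- right edge column even: the edge can be nonzero, and is constant
    have hw : ∀ k, k ≤ N-2 → chi (r+k) ((c+1)/2+(N-2)) = chi r ((c+1)/2+(N-2)) := by
      intro k
      induction k with
      | zero => intro _; rw [show r+0 = r by omega]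
      | succ k ih2 =>
        intro hk
        have hpas := chi_succ_succ (r+k) ((c+1)/2+(N-3))
        rw [show (c+1)/2+(N-3)+1 = (c+1)/2+(N-2) by omega] at hpas
        have hint : chi (r+k) ((c+1)/2+(N-3)) = 0 := by
          have := hzi k (N-3-k) (by omega) (by omega)
          rw [show (c+1)/2+k+(N-3-k) = (c+1)/2+(N-3) by omega] at this
          exact this
        rw [show r+(k+1) = (r+k)+1 by omega, hpas, hint]
        have h1 := chi_le_one (r+k) ((c+1)/2+(N-2))
        rw [show (0 + chi (r+k) ((c+1)/2+(N-2))) % 2 = chi (r+k) ((c+1)/2+(N-2)) by omega]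
        exact ih2 (by omega)
    rcases Nat.eq_zero_or_pos (chi r ((c+1)/2+(N-2))) with hv | hv
    · left
      apply eq_blank_of_zero hc
      intro k i hk hi
      rcases Nat.lt_or_ge i (N-2-k) with hii | hii
      · exact hzi k i hk (by omega)
      · have hieq : i = N-2-k := by omega
        subst hieq
        rw [show (c+1)/2+k+(N-2-k) = (c+1)/2+(N-2) by omega, hw k (by omega), hv]
    · right
      apply eq_rightside hc (by omega)
      · intro k hk
        have := chi_le_one r ((c+1)/2+(N-2))
        rw [show (c+1)/2+k+(N-2-k) = (c+1)/2+(N-2) by omega, hw k hk]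
        omega
      · exact fun k i hk hi hii => hzi k i hk hii
  · -- right edge column odd: everything vanishes
    left
    apply eq_blank_of_zero hc
    intro k i hk hi
    rcases Nat.lt_or_ge i (N-2-k) with hii | hii
    · exact hzi k i hk (by omega)
    · have hieq : i = N-2-k := by omega
      subst hieq
      exact hodd0 k (N-2-k) hk hi (by omega)

/-- Rigidity, row parities differ, column classes differ: blank or leftside -/
lemma rigid_md {N r c r' c' : ℕ} (hN : 4 ≤ N) (hc : c % 2 = 1) (hc' : c' % 2 = 1)
    (hrr : (r + r') % 2 = 1) (hcc : ((c+1)/2 + (c'+1)/2) % 2 = 1)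
    (heq : downPattern N r c = downPattern N r' c') :
    downPattern N r c = blankDown ∨ downPattern N r c = leftsideDown N := by
  have hext := pat_extract hc hc' heq
  -- cells with the "clashing" parity vanish : r side even ↔ column odd kills
  have hcl : ∀ k i, k < N → 2*i+1 ≤ 2*(N-1-k) →
      ((c+1)/2+k+i+(r+k)) % 2 = 1 → chi (r+k) ((c+1)/2+k+i) = 0 := by
    intro k i hk hi hp
    rcases Nat.even_or_odd (r+k) with ⟨A, hA⟩ | ⟨A, hA⟩
    · exact chi_even_odd (by omega) (by omega)
    · -- r side odd, then r' side even and its column is odd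
      rw [hext k i hk hi]
      exact chi_even_odd (by omega) (by omega)
  -- cells with i ≥ 1 vanish
  have hz : ∀ k i, k < N → 1 ≤ i → 2*i+1 ≤ 2*(N-1-k) → chi (r+k) ((c+1)/2+k+i) = 0 := by
    intro k i hk hi1 hi
    by_cases hp : ((c+1)/2+k+i+(r+k)) % 2 = 1
    · exact hcl k i hk hi hp
    · -- pair down to i-1, which clashes
      rcases Nat.even_or_odd (r+k) with ⟨A, hA⟩ | ⟨A, hA⟩
      · -- r+k even, column even. move to r' side: odd row, odd column: pair down
        rw [hext k i hk hi]
        have hpair : chi (r'+k) ((c'+1)/2+k+(i-1)) = chi (r'+k) ((c'+1)/2+k+i) := by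
          rw [show (c'+1)/2+k+i = ((c'+1)/2+k+(i-1))+1 by omega]
          exact chi_odd_pair (by omega) (by omega)
        rw [← hpair, ← hext k (i-1) hk (by omega)]
        exact hcl k (i-1) hk (by omega) (by omega)
      · -- r+k odd, column odd: pair down directly
        have hpair : chi (r+k) ((c+1)/2+k+(i-1)) = chi (r+k) ((c+1)/2+k+i) := by
          rw [show (c+1)/2+k+i = ((c+1)/2+k+(i-1))+1 by omega]
          exact chi_odd_pair (by omega) (by omega)
        rw [← hpair]
        exact hcl k (i-1) hk (by omega) (by omega)
  -- left column is constant
  have hv : ∀ k, k ≤ N-2 → chi (r+k) ((c+1)/2+k) = chi r ((c+1)/2) := by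
    intro k
    induction k with
    | zero => intro _; rw [show r+0 = r by omega, show (c+1)/2+0 = (c+1)/2 by omega]
    | succ k ih2 =>
      intro hk
      have hpas := chi_succ_succ (r+k) ((c+1)/2+k)
      have hint : chi (r+k) ((c+1)/2+k+1) = 0 := by
        have := hz k 1 (by omega) (by omega) (by omega)
        rw [show (c+1)/2+k+1 = (c+1)/2+k+1 by omega] at this
        exact this
      rw [show r+(k+1) = (r+k)+1 by omega, show (c+1)/2+(k+1) = ((c+1)/2+k)+1 by omega,
        hpas, hint]
      have h1 := chi_le_one (r+k) ((c+1)/2+k)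
      rw [show (chi (r+k) ((c+1)/2+k) + 0) % 2 = chi (r+k) ((c+1)/2+k) by omega]
      exact ih2 (by omega)
  rcases Nat.eq_zero_or_pos (chi r ((c+1)/2)) with hv0 | hv0
  · left
    apply eq_blank_of_zero hc
    intro k i hk hi
    rcases Nat.eq_zero_or_pos i with hi0 | hi0
    · subst hi0
      rw [show (c+1)/2+k+0 = (c+1)/2+k by omega, hv k (by omega), hv0]
    · exact hz k i hk hi0 hi
  · right
    apply eq_leftside hc (by omega)
    · intro k hk
      have := chi_le_one r ((c+1)/2)
      rw [hv k hk]
      omega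
    · exact fun k i hi1 hk hi => hz k i hk hi1 hi

/-! ### membership of special patterns -/

lemma blank_mem {N ρ γ : ℕ} (hN : 4 ≤ N) (hρ : ρ ≤ 1) (hγ : γ = 1 ∨ γ = 3) :
    blankDown ∈ PdownRC N ρ γ := by
  have hp : N+3 < 2^(N+3) := Nat.lt_two_pow_self
  have hp2 : (2:ℕ)^(N+4) = 2*2^(N+3) := by ring
  have hp3 : (2:ℕ)^(N+3) = 2*2^(N+2) := by ring
  refine ⟨2^(N+3) + ρ, γ+4, by omega, by omega, by omega, by omega, ?_⟩
  symm
  apply eq_blank_of_zero (by omega)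
  intro k i hk hi
  rw [show 2^(N+3) + ρ + k = 2^(N+3) + (ρ+k) by omega, chi_topbit (by omega) (by omega)]
  exact chi_zero_of_lt (by omega)

lemma topside_mem {N ρ γ : ℕ} (hN : 4 ≤ N) (hρ : ρ = 1) (hγ : γ = 1 ∨ γ = 3) :
    topsideDown N ∈ PdownRC N ρ γ := by
  have hp : N+3 < 2^(N+3) := Nat.lt_two_pow_self
  have hp2 : (2:ℕ)^(N+4) = 2*2^(N+3) := by ring
  have hp3 : (2:ℕ)^(N+3) = 2*2^(N+2) := by ring
  refine ⟨2^(N+3) - 1, γ, by omega, by omega, by omega, by omega, ?_⟩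
  symm
  apply eq_topside (by omega) (by omega)
  · intro i hi
    exact chi_allones (by omega)
  · intro k i hk1 hk hi
    rw [show 2^(N+3) - 1 + k = 2^(N+3) + (k-1) by omega, chi_topbit (by omega) (by omega)]
    exact chi_zero_of_lt (by omega)

lemma leftside_mem {N t : ℕ} (hN : 4 ≤ N) (ht : 1 ≤ t) (ht' : t ≤ 3) :
    leftsideDown N ∈ PdownRC N (t % 2) ((2*t-1) % 4) := by
  have hp : N+3 < 2^(N+3) := Nat.lt_two_pow_self
  have hp2 : (2:ℕ)^(N+4) = 2*2^(N+3) := by ring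
  have hp3 : (2:ℕ)^(N+3) = 2*2^(N+2) := by ring
  refine ⟨2^(N+3) + t, 2*t-1, by omega, by omega, by omega, by omega, ?_⟩
  symm
  apply eq_leftside (by omega) (by omega)
  · intro k hk
    rw [show 2^(N+3) + t + k = 2^(N+3) + (t+k) by omega,
      show (2*t-1+1)/2 + k = t+k by omega, chi_topbit (by omega) (by omega)]
    exact chi_self _
  · intro k i hi1 hk hi
    rw [show 2^(N+3) + t + k = 2^(N+3) + (t+k) by omega,
      show (2*t-1+1)/2 + k + i = t+k+i by omega, chi_topbit (by omega) (by omega)]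
    exact chi_zero_of_lt (by omega)

lemma rightside_mem {N ρ : ℕ} (hN : 4 ≤ N) (hρ : ρ ≤ 1) :
    rightsideDown N ∈ PdownRC N ρ ((3 + 2*N) % 4) := by
  have hp : N+3 < 2^(N+3) := Nat.lt_two_pow_self
  have hp2 : (2:ℕ)^(N+4) = 2*2^(N+3) := by ring
  have hp3 : (2:ℕ)^(N+3) = 2*2^(N+2) := by ring
  have hp4 : (2:ℕ)^(N+4) = 4*2^(N+2) := by ring
  refine ⟨2^(N+3) + (2+ρ), 2^(N+4) - 2*N + 3, by omega, by omega, by omega, by omega, ?_⟩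
  symm
  have hcol : (2^(N+4) - 2*N + 3 + 1)/2 = 2^(N+3) - N + 2 := by omega
  apply eq_rightside (by omega) (by omega)
  · intro k hk
    rw [show 2^(N+3) + (2+ρ) + k = 2^(N+3) + (2+ρ+k) by omega, hcol,
      show 2^(N+3) - N + 2 + k + (N-2-k) = 2^(N+3) + 0 by omega,
      chi_topbit2 (by omega) (by omega)]
    exact chi_zero_right _
  · intro k i hk hi hii
    rw [show 2^(N+3) + (2+ρ) + k = 2^(N+3) + (2+ρ+k) by omega, hcol,
      chi_topbit (by omega) (by omega)]
    exact chi_zero_of_lt (by omega)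

/-! ### non-membership of side patterns -/

lemma leftside_ne1 {N r c : ℕ} (hN : 4 ≤ N) (hc : c % 2 = 1) (hr : r % 2 = 0)
    (he : ((c+1)/2) % 2 = 1) : leftsideDown N ≠ downPattern N r c := by
  intro h
  have h1 := congrFun h (0, 2*0+1)
  rw [pat_cell hc (by omega) (by omega)] at h1
  have h2 : leftsideDown N (0, 2*0+1) = true := by
    unfold leftsideDown; simp
    try omega
  rw [h2] at h1
  have h3 := chi_even_odd (A := r+0) (j := (c+1)/2+0+0) (by omega) (by omega)
  rw [h3] at h1
  simp at h1

lemma leftside_ne2 {N r c : ℕ} (hN : 4 ≤ N) (hc : c % 2 = 1) (hr : r % 2 = 1)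
    (he : ((c+1)/2) % 2 = 0) : leftsideDown N ≠ downPattern N r c := by
  intro h
  have h1 := congrFun h (1, 2*0+1)
  rw [pat_cell hc (by omega) (by omega)] at h1
  have h2 : leftsideDown N (1, 2*0+1) = true := by
    unfold leftsideDown; simp
    try omega
  rw [h2] at h1
  have h3 := chi_even_odd (A := r+1) (j := (c+1)/2+1+0) (by omega) (by omega)
  rw [h3] at h1
  simp at h1

lemma rightside_ne {N r c : ℕ} (hN : 4 ≤ N) (hc : c % 2 = 1)
    (he : ((c+1)/2 + N) % 2 = 1) : rightsideDown N ≠ downPattern N r c := by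
  intro h
  have h1 := congrFun h (r % 2, 2*(N-2-(r%2))+1)
  rw [pat_cell hc (by omega) (by omega)] at h1
  have h2 : rightsideDown N (r % 2, 2*(N-2-(r%2))+1) = true := by
    unfold rightsideDown; simp; omega
  rw [h2] at h1
  have h3 := chi_even_odd (A := r+(r%2)) (j := (c+1)/2+(r%2)+(N-2-(r%2))) (by omega) (by omega)
  rw [h3] at h1
  simp at h1

/-! ### distinctness -/

lemma blank_ne_top {N : ℕ} (hN : 4 ≤ N) : blankDown ≠ topsideDown N := by
  intro h
  have := congrFun h (0, 1)
  unfold blankDown topsideDown at this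
  simp at this
  try omega

lemma blank_ne_left {N : ℕ} (hN : 4 ≤ N) : blankDown ≠ leftsideDown N := by
  intro h
  have := congrFun h (0, 1)
  unfold blankDown leftsideDown at this
  simp at this
  try omega

lemma blank_ne_right {N : ℕ} (hN : 4 ≤ N) : blankDown ≠ rightsideDown N := by
  intro h
  have := congrFun h (0, 2*(N-1)-1)
  unfold blankDown rightsideDown at this
  simp at this
  try omega

lemma top_ne_left {N : ℕ} (hN : 4 ≤ N) : topsideDown N ≠ leftsideDown N := by
  intro h
  have := congrFun h (0, 3)
  unfold topsideDown leftsideDown at this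
  simp at this
  try omega

lemma top_ne_right {N : ℕ} (hN : 4 ≤ N) : topsideDown N ≠ rightsideDown N := by
  intro h
  have := congrFun h (1, 2*(N-2)-1)
  unfold topsideDown rightsideDown at this
  simp at this
  try omega

lemma left_ne_right {N : ℕ} (hN : 4 ≤ N) : leftsideDown N ≠ rightsideDown N := by
  intro h
  have := congrFun h (0, 1)
  unfold leftsideDown rightsideDown at this
  simp at this
  try omega

/-! ### finiteness -/

lemma Pdown_finite (n : ℕ) : (Pdown n).Finite := by
  apply Set.Finite.subset (Set.finite_range
    (fun f : Fin n × Fin (2*n) → Bool => (fun q : ℕ × ℕ =>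
      if h : q.1 < n ∧ q.2 < 2*n then f (⟨q.1, h.1⟩, ⟨q.2, h.2⟩) else false)))
  rintro p ⟨r, c, hc, hval, rfl⟩
  refine ⟨fun q => downPattern n r c (q.1.1, q.2.1), ?_⟩
  funext q
  dsimp only
  split_ifs with h
  · rfl
  · unfold downPattern
    rw [if_neg (show ¬(q.1 < n ∧ q.2 ≤ 2*(n-1-q.1)) by omega)]

lemma PdownRC_finite (n ρ γ : ℕ) : (PdownRC n ρ γ).Finite := by
  apply Set.Finite.subset (Pdown_finite n)
  rintro p ⟨r, c, h1, h2, h3, h4, rfl⟩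
  exact ⟨r, c, h1, h2, rfl⟩

lemma union_eq (N : ℕ) :
    Pdown N = ((PdownRC N 0 1 ∪ PdownRC N 0 3) ∪ PdownRC N 1 1) ∪ PdownRC N 1 3 := by
  ext p
  constructor
  · rintro ⟨r, c, hc, hv, rfl⟩
    rcases Nat.even_or_odd r with ⟨a, ha⟩ | ⟨a, ha⟩ <;>
      rcases (show c % 4 = 1 ∨ c % 4 = 3 by omega) with h4 | h4
    · exact Or.inl (Or.inl (Or.inl ⟨r, c, hc, hv, by omega, h4, rfl⟩))
    · exact Or.inl (Or.inl (Or.inr ⟨r, c, hc, hv, by omega, h4, rfl⟩))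
    · exact Or.inl (Or.inr ⟨r, c, hc, hv, by omega, h4, rfl⟩)
    · exact Or.inr ⟨r, c, hc, hv, by omega, h4, rfl⟩
  · rintro (((⟨r,c,h1,h2,h3,h4,rfl⟩ | ⟨r,c,h1,h2,h3,h4,rfl⟩) | ⟨r,c,h1,h2,h3,h4,rfl⟩) |
      ⟨r,c,h1,h2,h3,h4,rfl⟩) <;> exact ⟨r, c, h1, h2, rfl⟩

/-- the inclusion-exclusion count, N even -/
lemma count_even {N : ℕ} (hN : 4 ≤ N) (hNe : N % 2 = 0) :
    (Pdown N).ncard + 6 = (PdownRC N 0 1).ncard + (PdownRC N 0 3).ncard +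
      (PdownRC N 1 1).ncard + (PdownRC N 1 3).ncard := by
  set A := PdownRC N 0 1
  set B := PdownRC N 0 3
  set C := PdownRC N 1 1
  set D := PdownRC N 1 3
  have hAB : A ∩ B = {blankDown} := by
    apply Set.Subset.antisymm
    · rintro p ⟨⟨r,c,h1,h2,h3,h4,rfl⟩, ⟨r',c',g1,g2,g3,g4,hp⟩⟩
      exact rigid_ee h1 g1 h3 g3 (by omega) hp
    · rintro p rfl
      exact ⟨blank_mem hN (by omega) (Or.inl rfl), blank_mem hN (by omega) (Or.inr rfl)⟩
  have hC : (A ∪ B) ∩ C = {blankDown, leftsideDown N} := by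
    apply Set.Subset.antisymm
    · rintro p ⟨hAB', ⟨r',c',g1,g2,g3,g4,rfl⟩⟩
      rcases hAB' with ⟨r,c,h1,h2,h3,h4,hp⟩ | ⟨r,c,h1,h2,h3,h4,hp⟩
      · -- A ∩ C : blank or rightside; rightside impossible (e odd, N even)
        rcases rigid_me hN g1 h1 (by omega) (by omega) hp with hb | hr
        · exact Or.inl hb
        · exact absurd (hr.symm.trans hp) (rightside_ne hN h1 (by omega))
      · -- B ∩ C : blank or leftside
        rcases rigid_md hN g1 h1 (by omega) (by omega) hp with hb | hl
        · exact Or.inl hb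
        · exact Or.inr hl
    · rintro p (rfl | rfl)
      · exact ⟨Or.inl (blank_mem hN (by omega) (Or.inl rfl)),
          blank_mem hN (by omega) (Or.inl rfl)⟩
      · constructor
        · right
          have := leftside_mem (N := N) hN (t := 2) (by omega) (by omega)
          norm_num at this
          exact this
        · have := leftside_mem (N := N) hN (t := 3) (by omega) (by omega)
          norm_num at this
          exact this
  have hD : ((A ∪ B) ∪ C) ∩ D = {blankDown, rightsideDown N, topsideDown N} := by
    apply Set.Subset.antisymm
    · rintro p ⟨hABC, ⟨r',c',g1,g2,g3,g4,rfl⟩⟩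
      rcases hABC with (⟨r,c,h1,h2,h3,h4,hp⟩ | ⟨r,c,h1,h2,h3,h4,hp⟩) | ⟨r,c,h1,h2,h3,h4,hp⟩
      · -- A ∩ D : blank or leftside; leftside impossible in A
        rcases rigid_md hN g1 h1 (by omega) (by omega) hp with hb | hl
        · exact Or.inl hb
        · exact absurd (hl.symm.trans hp) (leftside_ne1 hN h1 h3 (by omega))
      · -- B ∩ D : blank or rightside
        rcases rigid_me hN g1 h1 (by omega) (by omega) hp with hb | hr
        · exact Or.inl hb
        · exact Or.inr (Or.inl hr)
      · -- C ∩ D : blank or topside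
        rcases rigid_oo hN g1 h1 g3 h3 (by omega) hp with hb | ht
        · exact Or.inl hb
        · exact Or.inr (Or.inr ht)
    · have hrs : rightsideDown N ∈ PdownRC N 0 3 ∧ rightsideDown N ∈ PdownRC N 1 3 := by
        constructor
        · have := rightside_mem (N := N) (ρ := 0) hN (by omega)
          rwa [show (3 + 2*N) % 4 = 3 by omega] at this
        · have := rightside_mem (N := N) (ρ := 1) hN (by omega)
          rwa [show (3 + 2*N) % 4 = 3 by omega] at this
      rintro p (rfl | rfl | rfl)
      · exact ⟨Or.inl (Or.inl (blank_mem hN (by omega) (Or.inl rfl))),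
          blank_mem hN (by omega) (Or.inr rfl)⟩
      · exact ⟨Or.inl (Or.inr hrs.1), hrs.2⟩
      · exact ⟨Or.inr (topside_mem hN rfl (Or.inl rfl)), topside_mem hN rfl (Or.inr rfl)⟩
  have finA := PdownRC_finite N 0 1
  have finB := PdownRC_finite N 0 3
  have finC := PdownRC_finite N 1 1
  have finD := PdownRC_finite N 1 3
  have e1 := Set.ncard_union_add_ncard_inter A B finA finB
  rw [hAB, Set.ncard_singleton] at e1
  have e2 := Set.ncard_union_add_ncard_inter (A ∪ B) C (finA.union finB) finC
  rw [hC, Set.ncard_pair (blank_ne_left hN)] at e2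
  have e3 := Set.ncard_union_add_ncard_inter ((A ∪ B) ∪ C) D
    ((finA.union finB).union finC) finD
  rw [hD] at e3
  have h3 : ({blankDown, rightsideDown N, topsideDown N} : Set (ℕ × ℕ → Bool)).ncard = 3 :=
    Set.ncard_eq_three.mpr ⟨_, _, _, blank_ne_right hN, blank_ne_top hN,
      fun h => top_ne_right hN h.symm, rfl⟩
  rw [show Pdown N = ((A ∪ B) ∪ C) ∪ D from union_eq N]
  omega

/-- the inclusion-exclusion count, N odd -/
lemma count_odd {N : ℕ} (hN : 4 ≤ N) (hNo : N % 2 = 1) :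
    (Pdown N).ncard + 6 = (PdownRC N 0 1).ncard + (PdownRC N 0 3).ncard +
      (PdownRC N 1 1).ncard + (PdownRC N 1 3).ncard := by
  set A := PdownRC N 0 1
  set B := PdownRC N 0 3
  set C := PdownRC N 1 1
  set D := PdownRC N 1 3
  have hAB : A ∩ B = {blankDown} := by
    apply Set.Subset.antisymm
    · rintro p ⟨⟨r,c,h1,h2,h3,h4,rfl⟩, ⟨r',c',g1,g2,g3,g4,hp⟩⟩
      exact rigid_ee h1 g1 h3 g3 (by omega) hp
    · rintro p rfl
      exact ⟨blank_mem hN (by omega) (Or.inl rfl), blank_mem hN (by omega) (Or.inr rfl)⟩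
  have hC : (A ∪ B) ∩ C = {blankDown, rightsideDown N, leftsideDown N} := by
    apply Set.Subset.antisymm
    · rintro p ⟨hAB', ⟨r',c',g1,g2,g3,g4,rfl⟩⟩
      rcases hAB' with ⟨r,c,h1,h2,h3,h4,hp⟩ | ⟨r,c,h1,h2,h3,h4,hp⟩
      · -- A ∩ C : blank or rightside (kept, e odd ≡ N odd)
        rcases rigid_me hN g1 h1 (by omega) (by omega) hp with hb | hr
        · exact Or.inl hb
        · exact Or.inr (Or.inl hr)
      · -- B ∩ C : blank or leftside
        rcases rigid_md hN g1 h1 (by omega) (by omega) hp with hb | hl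
        · exact Or.inl hb
        · exact Or.inr (Or.inr hl)
    · have hrs : rightsideDown N ∈ PdownRC N 0 1 ∧ rightsideDown N ∈ PdownRC N 1 1 := by
        constructor
        · have := rightside_mem (N := N) (ρ := 0) hN (by omega)
          rwa [show (3 + 2*N) % 4 = 1 by omega] at this
        · have := rightside_mem (N := N) (ρ := 1) hN (by omega)
          rwa [show (3 + 2*N) % 4 = 1 by omega] at this
      rintro p (rfl | rfl | rfl)
      · exact ⟨Or.inl (blank_mem hN (by omega) (Or.inl rfl)),
          blank_mem hN (by omega) (Or.inl rfl)⟩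
      · exact ⟨Or.inl hrs.1, hrs.2⟩
      · constructor
        · right
          have := leftside_mem (N := N) hN (t := 2) (by omega) (by omega)
          norm_num at this
          exact this
        · have := leftside_mem (N := N) hN (t := 3) (by omega) (by omega)
          norm_num at this
          exact this
  have hD : ((A ∪ B) ∪ C) ∩ D = {blankDown, topsideDown N} := by
    apply Set.Subset.antisymm
    · rintro p ⟨hABC, ⟨r',c',g1,g2,g3,g4,rfl⟩⟩
      rcases hABC with (⟨r,c,h1,h2,h3,h4,hp⟩ | ⟨r,c,h1,h2,h3,h4,hp⟩) | ⟨r,c,h1,h2,h3,h4,hp⟩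
      · -- A ∩ D : blank or leftside; leftside impossible in A
        rcases rigid_md hN g1 h1 (by omega) (by omega) hp with hb | hl
        · exact Or.inl hb
        · exact absurd (hl.symm.trans hp) (leftside_ne1 hN h1 h3 (by omega))
      · -- B ∩ D : blank or rightside; rightside impossible (e even, N odd)
        rcases rigid_me hN g1 h1 (by omega) (by omega) hp with hb | hr
        · exact Or.inl hb
        · exact absurd (hr.symm.trans hp) (rightside_ne hN h1 (by omega))
      · -- C ∩ D : blank or topside
        rcases rigid_oo hN g1 h1 g3 h3 (by omega) hp with hb | ht
        · exact Or.inl hb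
        · exact Or.inr ht
    · rintro p (rfl | rfl)
      · exact ⟨Or.inl (Or.inl (blank_mem hN (by omega) (Or.inl rfl))),
          blank_mem hN (by omega) (Or.inr rfl)⟩
      · exact ⟨Or.inr (topside_mem hN rfl (Or.inl rfl)), topside_mem hN rfl (Or.inr rfl)⟩
  have finA := PdownRC_finite N 0 1
  have finB := PdownRC_finite N 0 3
  have finC := PdownRC_finite N 1 1
  have finD := PdownRC_finite N 1 3
  have e1 := Set.ncard_union_add_ncard_inter A B finA finB
  rw [hAB, Set.ncard_singleton] at e1
  have e2 := Set.ncard_union_add_ncard_inter (A ∪ B) C (finA.union finB) finC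
  rw [hC] at e2
  have h3 : ({blankDown, rightsideDown N, leftsideDown N} : Set (ℕ × ℕ → Bool)).ncard = 3 :=
    Set.ncard_eq_three.mpr ⟨_, _, _, blank_ne_right hN, blank_ne_left hN,
      fun h => left_ne_right hN h.symm, rfl⟩
  have e3 := Set.ncard_union_add_ncard_inter ((A ∪ B) ∪ C) D
    ((finA.union finB).union finC) finD
  rw [hD, Set.ncard_pair (blank_ne_top hN)] at e3
  rw [show Pdown N = ((A ∪ B) ∪ C) ∪ D from union_eq N]
  omega

theorem sierpinski_recursion_Aprime (n : ℕ) (hn : 2 ≤ n) :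
    (Pdown (2 * n)).ncard + 6 = (Pdown n).ncard + 3 * (Pdown (n + 1)).ncard ∧
    (Pdown (2 * n + 1)).ncard + 6 = 3 * (Pdown (n + 1)).ncard + (Pdown (n + 2)).ncard := by
  constructor
  · have h := count_even (N := 2*n) (by omega) (by omega)
    rw [card01 (n' := n) (by omega), card03 (n' := n+1) (by omega),
      card11 (n' := n+1) (by omega) (by omega), card13 (n' := n+1) (by omega) (by omega)] at h
    omega
  · have h := count_odd (N := 2*n+1) (by omega) (by omega)
    rw [card01 (n' := n+1) (by omega), card03 (n' := n+1) (by omega),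
      card11 (n' := n+2) (by omega) (by omega), card13 (n' := n+1) (by omega) (by omega)] at h
    omega
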